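/- Let G be a totally disconnected locally compact Hausdorff topological group, g ∈ G, and U a compact open subgroup of G. The following are equivalent: (1) U = U₊U₋ (as sets, where U₊U₋ is the pointwise product); (2) U is tidy above for g, i.e., [gU₊g⁻¹ : U₊] = [gUg⁻¹ : gUg⁻¹ ∩ U]; (3) U = U₊ · (U ∩ g⁻¹Ug) (as sets). -/

import Mathlib

open MeasureTheory Pointwise

variable {G : Type*}

/-- The conjugate subgroup `gUg⁻¹`. -/
def conjSubgroup [Group G] (g : G) (U : Subgroup G) : Subgroup G :=
  U.map (MulAut.conj g).toMonoidHom

/-- A subgroup is compact open if its carrier set is compact and open. -/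
def Subgroup.IsCompactOpen [Group G] [TopologicalSpace G] (U : Subgroup G) : Prop :=
  IsCompact (U : Set G) ∧ IsOpen (U : Set G)

/-- `U₊ = ⋂_{n ≥ 0} gⁿ U g⁻ⁿ`. -/
def plusSubgroup [Group G] (g : G) (U : Subgroup G) : Subgroup G :=
  ⨅ n : ℕ, conjSubgroup (g ^ n) U

/-- `U₋ = ⋂_{n ≥ 0} g⁻ⁿ U gⁿ`. -/
def minusSubgroup [Group G] (g : G) (U : Subgroup G) : Subgroup G :=
  ⨅ n : ℕ, conjSubgroup (g⁻¹ ^ n) U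

/-- `U` is tidy above for `g` if `[gU₊g⁻¹ : U₊] = [gUg⁻¹ : gUg⁻¹ ∩ U]`. -/
def TidyAbove [Group G] (g : G) (U : Subgroup G) : Prop :=
  (plusSubgroup g U).relIndex (conjSubgroup g (plusSubgroup g U)) = U.relIndex (conjSubgroup g U)

/-- `U₊₊ = ⋃_{n ≥ 0} gⁿ U₊ g⁻ⁿ` as a set. -/
def plusPlusSet [Group G] (g : G) (U : Subgroup G) : Set G :=
  ⋃ n : ℕ, ((conjSubgroup (g ^ n) (plusSubgroup g U) : Subgroup G) : Set G)

/-- `U₋₋ = ⋃_{n ≥ 0} g⁻ⁿ U₋ gⁿ` as a set. -/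
def minusMinusSet [Group G] (g : G) (U : Subgroup G) : Set G :=
  ⋃ n : ℕ, ((conjSubgroup (g⁻¹ ^ n) (minusSubgroup g U) : Subgroup G) : Set G)

/-- `U` is tidy below for `g` if `U₊₊` and `U₋₋` are closed. -/
def TidyBelow [Group G] [TopologicalSpace G] (g : G) (U : Subgroup G) : Prop :=
  IsClosed (plusPlusSet g U) ∧ IsClosed (minusMinusSet g U)

/-- `U` is tidy for `g` if it is tidy above and tidy below for `g`. -/
def Tidy [Group G] [TopologicalSpace G] (g : G) (U : Subgroup G) : Prop :=
  TidyAbove g U ∧ TidyBelow g U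

section helpers

variable {G : Type*}

section basic
variable [Group G] {g a b x : G} {U V : Subgroup G}

lemma mem_conjSubgroup : x ∈ conjSubgroup a U ↔ a⁻¹ * x * a ∈ U := by
  constructor
  · rintro ⟨u, hu, rfl⟩
    simpa [MulAut.conj, mul_assoc] using hu
  · intro h
    exact ⟨a⁻¹ * x * a, h, by simp [MulAut.conj, mul_assoc]⟩

lemma conjSubgroup_one (U : Subgroup G) : conjSubgroup (1 : G) U = U := by
  ext x; simp [mem_conjSubgroup]

lemma conjSubgroup_conjSubgroup (a b : G) (U : Subgroup G) :
    conjSubgroup a (conjSubgroup b U) = conjSubgroup (a * b) U := by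
  ext x; simp [mem_conjSubgroup, mul_assoc]

lemma conjSubgroup_mono (h : U ≤ V) : conjSubgroup a U ≤ conjSubgroup a V := by
  intro x hx; rw [mem_conjSubgroup] at hx ⊢; exact h hx

lemma conjSubgroup_iInf {ι : Sort*} (a : G) (H : ι → Subgroup G) :
    conjSubgroup a (⨅ i, H i) = ⨅ i, conjSubgroup a (H i) := by
  ext x
  simp only [mem_conjSubgroup, Subgroup.mem_iInf]

lemma mem_plusSubgroup : x ∈ plusSubgroup g U ↔ ∀ n : ℕ, x ∈ conjSubgroup (g ^ n) U :=
  Subgroup.mem_iInf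

lemma mem_minusSubgroup : x ∈ minusSubgroup g U ↔ ∀ n : ℕ, x ∈ conjSubgroup (g⁻¹ ^ n) U :=
  Subgroup.mem_iInf

lemma plusSubgroup_le : plusSubgroup g U ≤ U := by
  intro x hx
  have := mem_plusSubgroup.mp hx 0
  simpa [conjSubgroup_one] using this

lemma minusSubgroup_le : minusSubgroup g U ≤ U := by
  intro x hx
  have := mem_minusSubgroup.mp hx 0
  simpa [conjSubgroup_one] using this

lemma minusSubgroup_le_conj : minusSubgroup g U ≤ conjSubgroup g⁻¹ U := by
  intro x hx
  have := mem_minusSubgroup.mp hx 1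
  simpa using this

lemma conj_inv_plusSubgroup_le : conjSubgroup g⁻¹ (plusSubgroup g U) ≤ plusSubgroup g U := by
  intro x hx
  rw [mem_conjSubgroup] at hx
  rw [mem_plusSubgroup]
  intro n
  have h := mem_plusSubgroup.mp hx (n + 1)
  rw [mem_conjSubgroup] at h ⊢
  rw [pow_succ'] at h
  convert h using 1
  group

lemma conj_inv_plusSubgroup_eq :
    conjSubgroup g⁻¹ (plusSubgroup g U) = plusSubgroup g U ⊓ (U ⊓ conjSubgroup g⁻¹ U) := by
  have key : ∀ y : G, y ∈ conjSubgroup g⁻¹ (plusSubgroup g U) ↔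
      ∀ n : ℕ, y ∈ conjSubgroup (g⁻¹ * g ^ n) U := by
    intro y
    rw [plusSubgroup, conjSubgroup_iInf, Subgroup.mem_iInf]
    simp only [conjSubgroup_conjSubgroup]
  ext x
  rw [key, Subgroup.mem_inf, Subgroup.mem_inf, mem_plusSubgroup]
  constructor
  · intro h
    refine ⟨fun m => ?_, ?_, ?_⟩
    · have := h (m + 1)
      rwa [pow_succ', inv_mul_cancel_left] at this
    · have := h 1
      simpa [conjSubgroup_one] using this
    · have := h 0
      simpa using this
  · rintro ⟨hP, hu, hc⟩ n
    cases n with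
    | zero => simpa using hc
    | succ m =>
      rw [pow_succ', inv_mul_cancel_left]
      exact hP m

lemma comap_conj_eq (a : G) (H : Subgroup G) :
    H.comap (MulAut.conj a).toMonoidHom = conjSubgroup a⁻¹ H := by
  ext x
  simp [mem_conjSubgroup, Subgroup.mem_comap, MulAut.conj, mul_assoc]

lemma relindex_conj_left (a : G) (H K : Subgroup G) :
    (conjSubgroup a⁻¹ H).relIndex K = H.relIndex (conjSubgroup a K) := by
  rw [← comap_conj_eq]
  exact Subgroup.relIndex_comap (H := H) (MulAut.conj a).toMonoidHom K

lemma coe_mul_subset {A B C : Subgroup G} (hA : A ≤ C) (hB : B ≤ C) :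
    (A : Set G) * (B : Set G) ⊆ (C : Set G) := by
  rintro x ⟨a, ha, b, hb, rfl⟩
  exact C.mul_mem (hA ha) (hB hb)

lemma relindex_eq_iff_mul {A B N : Subgroup G}
    (hAB : A ≤ B) (hNB : N ≤ B) (hfin : N.relIndex B ≠ 0) :
    N.relIndex A = N.relIndex B ↔ (B : Set G) = (A : Set G) * (N : Set G) := by
  have hsub : (A : Set G) * (N : Set G) ⊆ (B : Set G) := coe_mul_subset hAB hNB
  let ψ : A ⧸ N.subgroupOf A → B ⧸ N.subgroupOf B :=
    Quotient.map' (Subgroup.inclusion hAB) (fun a b h => by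
      rw [QuotientGroup.leftRel_apply] at h ⊢
      simpa [Subgroup.mem_subgroupOf] using h)
  have hinj : Function.Injective ψ := by
    intro x y
    refine Quotient.inductionOn₂' x y (fun a b h => ?_)
    simp only [ψ, Quotient.map'_mk''] at h; rw [Quotient.eq''] at h
    rw [Quotient.eq'']
    rw [QuotientGroup.leftRel_apply] at h ⊢
    simpa [Subgroup.mem_subgroupOf] using h
  have hsurj : Function.Surjective ψ ↔ (B : Set G) ⊆ (A : Set G) * (N : Set G) := by
    constructor
    · intro hs b hb
      obtain ⟨x, hx⟩ := hs (Quotient.mk'' ⟨b, hb⟩)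
      refine Quotient.inductionOn' x (fun a ha => ?_) hx
      simp only [ψ, Quotient.map'_mk''] at ha; rw [Quotient.eq''] at ha
      rw [QuotientGroup.leftRel_apply, Subgroup.mem_subgroupOf] at ha
      refine ⟨a, a.2, (a : G)⁻¹ * b, by simpa using ha, by group⟩
    · intro hs
      intro y
      refine Quotient.inductionOn' y (fun b => ?_)
      obtain ⟨a, ha, n, hn, hab⟩ := hs b.2
      refine ⟨Quotient.mk'' ⟨a, ha⟩, ?_⟩
      simp only [ψ, Quotient.map'_mk'']
      rw [Quotient.eq'', QuotientGroup.leftRel_apply, Subgroup.mem_subgroupOf]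
      have : a⁻¹ * (b : G) = n := by rw [← hab]; group
      simpa [this] using hn
  have hcardA : N.relIndex A = Nat.card (A ⧸ N.subgroupOf A) := rfl
  have hcardB : N.relIndex B = Nat.card (B ⧸ N.subgroupOf B) := rfl
  constructor
  · intro h
    have hfinB : Finite (B ⧸ N.subgroupOf B) := Nat.finite_of_card_ne_zero (hcardB ▸ hfin)
    have hbij : Function.Bijective ψ :=
      (Nat.bijective_iff_injective_and_card ψ).mpr ⟨hinj, by rw [← hcardA, ← hcardB, h]⟩
    exact le_antisymm (hsurj.mp hbij.surjective) hsub
  · intro h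
    have hbij : Function.Bijective ψ := ⟨hinj, hsurj.mpr h.le⟩
    rw [hcardA, hcardB]
    exact Nat.card_eq_of_bijective ψ hbij

lemma tidyAbove_iff (g : G) (U : Subgroup G) :
    TidyAbove g U ↔
      (U ⊓ conjSubgroup g⁻¹ U).relIndex (plusSubgroup g U)
        = (U ⊓ conjSubgroup g⁻¹ U).relIndex U := by
  have h1 : (plusSubgroup g U).relIndex (conjSubgroup g (plusSubgroup g U))
      = (U ⊓ conjSubgroup g⁻¹ U).relIndex (plusSubgroup g U) := by
    rw [← relindex_conj_left g (plusSubgroup g U) (plusSubgroup g U), conj_inv_plusSubgroup_eq,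
      Subgroup.inf_relIndex_left]
  have h2 : U.relIndex (conjSubgroup g U) = (U ⊓ conjSubgroup g⁻¹ U).relIndex U := by
    rw [← relindex_conj_left g U U, ← Subgroup.inf_relIndex_right, inf_comm]
  rw [TidyAbove, h1, h2]

end basic

section topo
variable [Group G] [TopologicalSpace G] [IsTopologicalGroup G] {a g : G} {U : Subgroup G}

lemma coe_conjSubgroup_eq (a : G) (U : Subgroup G) :
    (conjSubgroup a U : Set G)
      = ((Homeomorph.mulLeft a).trans (Homeomorph.mulRight a⁻¹)) '' (U : Set G) := by
  ext x
  constructor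
  · rintro ⟨u, hu, rfl⟩
    exact ⟨u, hu, rfl⟩
  · rintro ⟨u, hu, rfl⟩
    exact ⟨u, hu, rfl⟩

lemma isClosed_conjSubgroup (h : IsClosed (U : Set G)) :
    IsClosed ((conjSubgroup a U : Set G)) := by
  rw [coe_conjSubgroup_eq]
  exact (Homeomorph.isClosed_image _).mpr h

lemma isOpen_conjSubgroup (h : IsOpen (U : Set G)) :
    IsOpen ((conjSubgroup a U : Set G)) := by
  rw [coe_conjSubgroup_eq]
  exact (Homeomorph.isOpen_image _).mpr h

lemma isClosed_plusSubgroup (h : IsClosed (U : Set G)) :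
    IsClosed ((plusSubgroup g U : Set G)) := by
  have : ((plusSubgroup g U : Subgroup G) : Set G) = ⋂ n : ℕ, ((conjSubgroup (g ^ n) U : Subgroup G) : Set G) := by
    ext x
    simp [mem_plusSubgroup]
  rw [this]
  exact isClosed_iInter (fun n => isClosed_conjSubgroup h)

end topo
end helpers

/-- Characterisations of tidiness above:
`U = U₊U₋` ↔ `U` tidy above ↔ `U = U₊ (U ∩ g⁻¹Ug)`. -/
theorem tidyAbove_characterisations
    [Group G] [TopologicalSpace G] [IsTopologicalGroup G] [LocallyCompactSpace G] [T2Space G]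
    [TotallyDisconnectedSpace G]
    (g : G) (U : Subgroup G) (hU : U.IsCompactOpen) :
    ((U : Set G) = (plusSubgroup g U : Set G) * (minusSubgroup g U : Set G) ↔ TidyAbove g U) ∧
    (TidyAbove g U ↔
      (U : Set G) = (plusSubgroup g U : Set G) * ((U ⊓ conjSubgroup g⁻¹ U : Subgroup G) : Set G)) := by
  obtain ⟨hUc, hUo⟩ := hU
  set P := plusSubgroup g U with hPdef
  set M := minusSubgroup g U with hMdef
  set W := U ⊓ conjSubgroup g⁻¹ U with hWdef
  have hUcl : IsClosed (U : Set G) := hUc.isClosed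
  have hPcl : IsClosed (P : Set G) := isClosed_plusSubgroup hUcl
  have hPle : P ≤ U := plusSubgroup_le
  have hWle : W ≤ U := inf_le_left
  have hPc : IsCompact (P : Set G) := hUc.of_isClosed_subset hPcl hPle
  -- finiteness of the index [U : W]
  have hWopen : IsOpen (W : Set G) := by
    have h1 : IsOpen ((conjSubgroup g⁻¹ U : Subgroup G) : Set G) := isOpen_conjSubgroup hUo
    have : (W : Set G) = (U : Set G) ∩ (conjSubgroup g⁻¹ U : Set G) := rfl
    rw [this]
    exact hUo.inter h1
  have hfin : W.relIndex U ≠ 0 := by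
    have hCU : CompactSpace U := isCompact_iff_compactSpace.mp hUc
    have hWU : IsOpen ((W.subgroupOf U : Subgroup U) : Set U) := by
      have : ((W.subgroupOf U : Subgroup U) : Set U) = (Subtype.val : U → G) ⁻¹' (W : Set G) := rfl
      rw [this]
      exact hWopen.preimage continuous_subtype_val
    have : Finite (U ⧸ W.subgroupOf U) := Subgroup.quotient_finite_of_isOpen _ hWU
    exact Subgroup.index_ne_zero_of_finite
  -- (2) ↔ (3)
  have key23 : TidyAbove g U ↔ (U : Set G) = (P : Set G) * (W : Set G) :=
    (tidyAbove_iff g U).trans (relindex_eq_iff_mul hPle hWle hfin)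
  -- (1) → (3)
  have h13 : (U : Set G) = (P : Set G) * (M : Set G) →
      (U : Set G) = (P : Set G) * (W : Set G) := by
    intro h
    refine Set.Subset.antisymm ?_ (coe_mul_subset hPle hWle)
    rw [h]
    refine Set.mul_subset_mul_left ?_
    have : M ≤ W := le_inf minusSubgroup_le minusSubgroup_le_conj
    exact fun x hx => this hx
  -- (3) → (1)
  have h31 : (U : Set G) = (P : Set G) * (W : Set G) →
      (U : Set G) = (P : Set G) * (M : Set G) := by
    intro h3
    -- the decreasing sequence V n = U ⊓ g⁻¹Ug ⊓ ... ⊓ g⁻ⁿUgⁿ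
    set V : ℕ → Subgroup G := fun n => Nat.rec U (fun _ Vn => U ⊓ conjSubgroup g⁻¹ Vn) n with hVdef
    have hV0 : V 0 = U := rfl
    have hVsucc : ∀ n, V (n + 1) = U ⊓ conjSubgroup g⁻¹ (V n) := fun n => rfl
    have hVle : ∀ n, V n ≤ U := by
      intro n
      cases n with
      | zero => exact le_rfl
      | succ m => exact inf_le_left
    have hVanti : ∀ n, V (n + 1) ≤ V n := by
      intro n
      induction n with
      | zero => exact inf_le_left
      | succ m ih =>
        show U ⊓ conjSubgroup g⁻¹ (V (m + 1)) ≤ U ⊓ conjSubgroup g⁻¹ (V m)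
        exact inf_le_inf le_rfl (conjSubgroup_mono ih)
    have hVanti' : Antitone V := antitone_nat_of_succ_le hVanti
    have hVM : ∀ x : G, (∀ n, x ∈ V n) → x ∈ M := by
      have hle : ∀ k, V k ≤ conjSubgroup (g⁻¹ ^ k) U := by
        intro k
        induction k with
        | zero => rw [pow_zero, conjSubgroup_one]; exact hVle 0
        | succ m ih =>
          rw [hVsucc, pow_succ', ← conjSubgroup_conjSubgroup]
          exact le_trans inf_le_right (conjSubgroup_mono ih)
      intro x hx
      rw [hMdef, mem_minusSubgroup]
      exact fun n => hle n (hx n)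
    have hVcl : ∀ n, IsClosed ((V n : Subgroup G) : Set G) := by
      intro n
      induction n with
      | zero => exact hUcl
      | succ m ih =>
        have : ((V (m+1) : Subgroup G) : Set G)
            = (U : Set G) ∩ ((conjSubgroup g⁻¹ (V m) : Subgroup G) : Set G) := rfl
        rw [this]
        exact hUcl.inter (isClosed_conjSubgroup ih)
    -- Step A : U = P * V n for all n
    have step : ∀ n, (U : Set G) = (P : Set G) * ((V n : Subgroup G) : Set G) := by
      intro n
      induction n with
      | zero =>
        refine Set.Subset.antisymm ?_ (coe_mul_subset hPle (hVle 0))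
        intro u hu
        exact ⟨1, P.one_mem, u, hu, one_mul u⟩
      | succ m ih =>
        refine Set.Subset.antisymm ?_ (coe_mul_subset hPle (hVle (m+1)))
        intro u hu
        have hu3 : u ∈ (P : Set G) * (W : Set G) := h3 ▸ hu
        obtain ⟨a, ha, b, hb, rfl⟩ := hu3
        have hbW : b ∈ W := hb
        have hbU : b ∈ U := hWle hbW
        have hbc : g * b * g⁻¹ ∈ U := by
          have h' : b ∈ conjSubgroup g⁻¹ U := (inf_le_right : W ≤ conjSubgroup g⁻¹ U) hbW
          rw [mem_conjSubgroup] at h'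
          simpa [mul_assoc] using h'
        have hmem : g * b * g⁻¹ ∈ (P : Set G) * ((V m : Subgroup G) : Set G) := ih ▸ hbc
        obtain ⟨a', ha', v, hv, heq⟩ := hmem
        have ha'P : a' ∈ P := ha'
        have hvV : v ∈ V m := hv
        have hc : g⁻¹ * a' * g ∈ P := by
          apply conj_inv_plusSubgroup_le
          rw [mem_conjSubgroup]
          simpa [mul_assoc] using ha'P
        have hd : g⁻¹ * v * g ∈ conjSubgroup g⁻¹ (V m) := by
          rw [mem_conjSubgroup]
          simpa [mul_assoc] using hvV
        have hb' : b = (g⁻¹ * a' * g) * (g⁻¹ * v * g) := by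
          have : a' * v = g * b * g⁻¹ := heq
          have hb2 : b = g⁻¹ * (a' * v) * g := by rw [this]; group
          rw [hb2]; group
        have hdU : g⁻¹ * v * g ∈ U := by
          have : g⁻¹ * v * g = (g⁻¹ * a' * g)⁻¹ * b := by rw [hb']; group
          rw [this]
          exact U.mul_mem (U.inv_mem (hPle hc)) hbU
        refine ⟨a * (g⁻¹ * a' * g), P.mul_mem ha hc, g⁻¹ * v * g, ?_, ?_⟩
        · rw [hVsucc]
          exact Subgroup.mem_inf.mpr ⟨hdU, hd⟩
        · rw [hb']; group
    -- Step B : compactness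
    refine Set.Subset.antisymm ?_ (coe_mul_subset hPle minusSubgroup_le)
    intro u hu
    set S : ℕ → Set G := fun n => (P : Set G) ∩ {x : G | x⁻¹ * u ∈ V n} with hSdef
    have hSne : ∀ n, (S n).Nonempty := by
      intro n
      have : u ∈ (P : Set G) * ((V n : Subgroup G) : Set G) := (step n) ▸ hu
      obtain ⟨a, ha, v, hv, rfl⟩ := this
      exact ⟨a, ha, by simpa [mul_assoc] using hv⟩
    have hScl : ∀ n, IsClosed (S n) := by
      intro n
      refine hPcl.inter ?_
      have : {x : G | x⁻¹ * u ∈ V n} = (fun x : G => x⁻¹ * u) ⁻¹' ((V n : Subgroup G) : Set G) := rfl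
      rw [this]
      exact (hVcl n).preimage (continuous_inv.mul continuous_const)
    have hScpt : ∀ n, IsCompact (S n) := fun n =>
      hPc.of_isClosed_subset (hScl n) Set.inter_subset_left
    have hSanti : Antitone S := by
      intro m n hmn
      exact Set.inter_subset_inter le_rfl (fun x hx => hVanti' hmn hx)
    have hdir : Directed (· ⊇ ·) S := hSanti.directed_ge
    obtain ⟨a, haall⟩ :=
      IsCompact.nonempty_iInter_of_directed_nonempty_isCompact_isClosed S hdir hSne hScpt hScl
    simp only [Set.mem_iInter] at haall
    have haP : a ∈ P := (haall 0).1
    have haV : ∀ n, a⁻¹ * u ∈ V n := fun n => (haall n).2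
    exact ⟨a, haP, a⁻¹ * u, hVM _ haV, by group⟩
  exact ⟨⟨fun h1 => key23.mpr (h13 h1), fun h2 => h31 (key23.mp h2)⟩, key23⟩
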